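/- (Deviation of the L-SVRG estimator from the optimal gradients.) For i = 1, …, n and l = 1, …, m let f_{il} : ℝ^d → ℝ be convex and differentiable with L_{il}-Lipschitz gradient; set f_i = (1/m) Σ_{l=1}^m f_{il}, f = (1/n) Σ_{i=1}^n f_i, and 𝓛 = 4 max_{i,l} L_{il}, and let x* be a global minimizer of f. Then for all x, w_1, …, w_n ∈ ℝ^d: (1/n) Σ_{i=1}^n (1/m) Σ_{l=1}^m ‖∇f_{il}(x) − ∇f_{il}(w_i) + ∇f_i(w_i) − ∇f_i(x*)‖² ≤ 4 σ₁ + 3 𝓛 (f(x) − f(x*)), where σ₁ = (1/(mn)) Σ_{i=1}^n Σ_{l=1}^m ‖∇f_{il}(w_i) − ∇f_{il}(x*)‖². -/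

import Mathlib

open Finset InnerProductSpace

set_option linter.unusedSectionVars false

section Helpers

variable {E : Type*} [NormedAddCommGroup E] [InnerProductSpace ℝ E] [CompleteSpace E]

local notation "⟪" x ", " y "⟫" => @inner ℝ _ _ x y

lemma inner_grad (f : E → ℝ) (x v : E) : ⟪gradient f x, v⟫ = fderiv ℝ f x v :=
  toDual_symm_apply

lemma norm_fderiv_sub_eq (f : E → ℝ) (u v : E) :
    ‖fderiv ℝ f u - fderiv ℝ f v‖ = ‖gradient f u - gradient f v‖ := by
  rw [show gradient f u - gradient f v
        = (toDual ℝ E).symm (fderiv ℝ f u - fderiv ℝ f v) by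
      simp [gradient]]
  rw [LinearIsometryEquiv.norm_map]

/-- First-order condition for convexity. -/
lemma first_order (f : E → ℝ) (hconv : ConvexOn ℝ Set.univ f)
    (hdiff : Differentiable ℝ f) (x y : E) :
    f x + fderiv ℝ f x (y - x) ≤ f y := by
  set g : ℝ → ℝ := fun t => f (x + t • (y - x)) with hg
  have hgeq : g = f ∘ (AffineMap.lineMap x y : ℝ →ᵃ[ℝ] E) := by
    funext t
    simp [hg, AffineMap.lineMap_apply, add_comm]
  have hgc : ConvexOn ℝ Set.univ g := by
    rw [hgeq]
    simpa using hconv.comp_affineMap (AffineMap.lineMap x y : ℝ →ᵃ[ℝ] E)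
  have hgd : ∀ t : ℝ, HasDerivAt g (fderiv ℝ f (x + t • (y - x)) (y - x)) t := by
    intro t
    have ht : HasDerivAt (fun t : ℝ => x + t • (y - x)) (y - x) t := by
      simpa using ((hasDerivAt_id t).smul_const (y - x)).const_add x
    exact ((hdiff _).hasFDerivAt).comp_hasDerivAt t ht
  have hs := hgc.le_slope_of_hasDerivAt (Set.mem_univ (0:ℝ)) (Set.mem_univ 1) one_pos
    (by simpa using hgd 0)
  have h0 : g 0 = f x := by simp [hg]
  have h1 : g 1 = f y := by simp [hg]
  rw [slope_def_field, h0, h1] at hs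
  rw [map_sub]
  have := (fderiv ℝ f x).map_sub y x
  simp at hs
  linarith

/-- Descent lemma (weak form, constant L instead of L/2). -/
lemma descent (f : E → ℝ) (hdiff : Differentiable ℝ f) (L : ℝ) (hL0 : 0 ≤ L)
    (hL : ∀ u v : E, ‖fderiv ℝ f u - fderiv ℝ f v‖ ≤ L * ‖u - v‖) (x z : E) :
    f z ≤ f x + fderiv ℝ f x (z - x) + L * ‖z - x‖ ^ 2 := by
  have key : ‖f z - f x - (fderiv ℝ f x) (z - x)‖ ≤ (L * ‖z - x‖) * ‖z - x‖ :=
    (convex_closedBall x ‖z - x‖).norm_image_sub_le_of_norm_fderiv_le'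
      (fun u _ => (hdiff u))
      (fun u hu => by
        calc ‖fderiv ℝ f u - fderiv ℝ f x‖ ≤ L * ‖u - x‖ := hL u x
          _ ≤ L * ‖z - x‖ := by
              apply mul_le_mul_of_nonneg_left _ hL0
              simpa [dist_eq_norm] using hu)
      (Metric.mem_closedBall_self (norm_nonneg _))
      (by simp [Metric.mem_closedBall, dist_eq_norm])
  have h2 : f z - f x - fderiv ℝ f x (z - x) ≤ L * ‖z - x‖ * ‖z - x‖ :=
    (le_abs_self _).trans (by simpa [Real.norm_eq_abs] using key)
  nlinarith [sq_nonneg ‖z - x‖]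

/-- Cocoercivity-type bound (weak constant 4L). -/
lemma cocoercive (f : E → ℝ) (hconv : ConvexOn ℝ Set.univ f)
    (hdiff : Differentiable ℝ f) (L : ℝ) (hL0 : 0 ≤ L)
    (hL : ∀ u v : E, ‖fderiv ℝ f u - fderiv ℝ f v‖ ≤ L * ‖u - v‖) (x y : E) :
    ‖gradient f x - gradient f y‖ ^ 2
      ≤ 4 * L * (f x - f y - ⟪gradient f y, x - y⟫) := by
  rcases eq_or_lt_of_le hL0 with hL0' | hLpos
  · -- L = 0 : gradient constant
    have h : gradient f x = gradient f y := by
      have := hL x y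
      rw [← hL0'] at this
      have h0 : ‖fderiv ℝ f x - fderiv ℝ f y‖ = 0 :=
        le_antisymm (by simpa using this) (norm_nonneg _)
      rw [norm_fderiv_sub_eq] at h0
      exact sub_eq_zero.mp (norm_eq_zero.mp h0)
    have hfo := first_order f hconv hdiff y x
    rw [h, ← hL0']
    have : ⟪gradient f y, x - y⟫ = fderiv ℝ f y (x - y) := inner_grad f y (x - y)
    simp
  · set v := gradient f x - gradient f y with hv
    set z := x - (2 * L)⁻¹ • v with hz
    have hd := descent f hdiff L hL0 hL x z
    have hfo := first_order f hconv hdiff y z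
    have hzx : z - x = -((2 * L)⁻¹ • v) := by rw [hz]; abel
    have hnzx : ‖z - x‖ ^ 2 = (2 * L)⁻¹ ^ 2 * ‖v‖ ^ 2 := by
      rw [hzx, norm_neg, norm_smul, mul_pow, Real.norm_eq_abs, sq_abs]
    have hDx : fderiv ℝ f x (z - x) = -((2 * L)⁻¹ * ⟪gradient f x, v⟫) := by
      rw [hzx, map_neg, ← inner_grad f x, real_inner_smul_right]
    have hDy : fderiv ℝ f y (z - y) = ⟪gradient f y, x - y⟫ - (2 * L)⁻¹ * ⟪gradient f y, v⟫ := by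
      have : z - y = (x - y) - (2 * L)⁻¹ • v := by rw [hz]; abel
      rw [← inner_grad f y, this, inner_sub_right, real_inner_smul_right]
    rw [hDy] at hfo
    rw [hDx, hnzx] at hd
    have hvv : ⟪gradient f x, v⟫ - ⟪gradient f y, v⟫ = ‖v‖ ^ 2 := by
      rw [← inner_sub_left, ← hv, real_inner_self_eq_norm_sq]
    set c : ℝ := (2 * L)⁻¹ with hc
    have hLne : L ≠ 0 := ne_of_gt hLpos
    have e : L * (c ^ 2 * ‖v‖ ^ 2) = c * ‖v‖ ^ 2 / 2 := by
      rw [hc]; field_simp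
    have hvv' : c * ⟪gradient f x, v⟫ - c * ⟪gradient f y, v⟫ = c * ‖v‖ ^ 2 := by
      rw [← mul_sub, hvv]
    have h1 : c * ‖v‖ ^ 2 / 2 ≤ f x - f y - ⟪gradient f y, x - y⟫ := by linarith
    have h2 : 4 * L * (c * ‖v‖ ^ 2 / 2) ≤ 4 * L * (f x - f y - ⟪gradient f y, x - y⟫) :=
      mul_le_mul_of_nonneg_left h1 (by linarith)
    have h3 : 4 * L * (c * ‖v‖ ^ 2 / 2) = ‖v‖ ^ 2 := by
      rw [hc]; field_simp; ring
    linarith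

/-- Variance bound: mean square deviation from the mean is at most mean square. -/
lemma variance_le {m : ℕ} (B : Fin m → E) (C : E)
    (hC : ∑ l, B l = (m : ℝ) • C) :
    ∑ l, ‖B l - C‖ ^ 2 ≤ ∑ l, ‖B l‖ ^ 2 := by
  have hs : ∑ l, ⟪B l, C⟫ = (m : ℝ) * ‖C‖ ^ 2 := by
    rw [← sum_inner, hC, real_inner_smul_left, real_inner_self_eq_norm_sq]
  have expand : ∑ l, ‖B l - C‖ ^ 2
      = ∑ l, ‖B l‖ ^ 2 - 2 * (∑ l, ⟪B l, C⟫) + (m : ℝ) * ‖C‖ ^ 2 := by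
    simp_rw [norm_sub_sq_real]
    rw [Finset.sum_add_distrib, Finset.sum_sub_distrib, ← Finset.mul_sum,
      Finset.sum_const, Finset.card_univ, Fintype.card_fin, nsmul_eq_mul]
  rw [expand, hs]
  nlinarith [sq_nonneg ‖C‖, Nat.cast_nonneg (α := ℝ) m]

lemma sq_norm_sub_le' (A D : E) : ‖A - D‖ ^ 2 ≤ 2 * ‖A‖ ^ 2 + 2 * ‖D‖ ^ 2 := by
  nlinarith [norm_sub_le A D, sq_nonneg (‖A‖ - ‖D‖), norm_nonneg A, norm_nonneg D,
    norm_nonneg (A - D)]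


end Helpers

section Main

local notation "⟪⟪" x ", " y "⟫⟫" => @inner ℝ _ _ x y

set_option maxHeartbeats 1000000 in
/-- (Deviation of the L-SVRG estimator from the optimal gradients.) -/
theorem stmt18 (d n m : ℕ) (hn : 0 < n) (hm : 0 < m)
    (f : Fin n → Fin m → EuclideanSpace ℝ (Fin d) → ℝ)
    (L' : Fin n → Fin m → NNReal)
    (hconv : ∀ i l, ConvexOn ℝ Set.univ (f i l))
    (hdiff : ∀ i l, Differentiable ℝ (f i l))
    (hlip : ∀ i l, LipschitzWith (L' i l) (fun x => gradient (f i l) x))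
    (fi : Fin n → EuclideanSpace ℝ (Fin d) → ℝ)
    (hfi : ∀ i x, fi i x = (m : ℝ)⁻¹ * ∑ l, f i l x)
    (F : EuclideanSpace ℝ (Fin d) → ℝ)
    (hF : ∀ x, F x = (n : ℝ)⁻¹ * ∑ i, fi i x)
    (𝓛 : ℝ) (h𝓛 : 𝓛 = 4 * (univ.sup fun i => univ.sup fun l => L' i l : NNReal))
    (xs : EuclideanSpace ℝ (Fin d)) (hmin : ∀ y, F xs ≤ F y) :
    ∀ (x : EuclideanSpace ℝ (Fin d)) (w : Fin n → EuclideanSpace ℝ (Fin d)),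
      (n : ℝ)⁻¹ * ∑ i, (m : ℝ)⁻¹ * ∑ l,
        ‖gradient (f i l) x - gradient (f i l) (w i) +
          gradient (fi i) (w i) - gradient (fi i) xs‖ ^ 2 ≤
      4 * ((1 / (m * n : ℝ)) * ∑ i, ∑ l,
          ‖gradient (f i l) (w i) - gradient (f i l) xs‖ ^ 2) +
        3 * 𝓛 * (F x - F xs) := by
  intro x w
  have hm' : (m : ℝ) ≠ 0 := Nat.cast_ne_zero.mpr hm.ne'
  have hn' : (n : ℝ) ≠ 0 := Nat.cast_ne_zero.mpr hn.ne'
  have hfi' : ∀ i, fi i = fun z => (m : ℝ)⁻¹ * ∑ l, f i l z := fun i => funext (hfi i)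
  have hF' : F = fun z => (n : ℝ)⁻¹ * ∑ i, fi i z := funext hF
  -- Lipschitz bound on fderiv
  have hlipD : ∀ i l (u v : EuclideanSpace ℝ (Fin d)),
      ‖fderiv ℝ (f i l) u - fderiv ℝ (f i l) v‖ ≤ (L' i l : ℝ) * ‖u - v‖ := by
    intro i l u v
    rw [norm_fderiv_sub_eq]
    simpa [dist_eq_norm] using (hlip i l).dist_le_mul u v
  -- derivative of fi
  have hDfi : ∀ i (z : EuclideanSpace ℝ (Fin d)), HasFDerivAt (fi i) ((m : ℝ)⁻¹ • ∑ l, fderiv ℝ (f i l) z) z := by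
    intro i z
    rw [hfi' i]
    exact (HasFDerivAt.fun_sum (fun l _ => ((hdiff i l) z).hasFDerivAt)).const_mul _
  have hdfi : ∀ i, Differentiable ℝ (fi i) := fun i z => (hDfi i z).differentiableAt
  have hgfi : ∀ i (z : EuclideanSpace ℝ (Fin d)), gradient (fi i) z = (m : ℝ)⁻¹ • ∑ l, gradient (f i l) z := by
    intro i z
    have h0 : gradient (fi i) z = (toDual ℝ (EuclideanSpace ℝ (Fin d))).symm (fderiv ℝ (fi i) z) := rfl
    rw [h0, (hDfi i z).fderiv, map_smul, map_sum]
    rfl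
  -- derivative of F
  have hDF : ∀ z : EuclideanSpace ℝ (Fin d), HasFDerivAt F ((n : ℝ)⁻¹ • ∑ i, fderiv ℝ (fi i) z) z := by
    intro z
    rw [hF']
    exact (HasFDerivAt.fun_sum fun i _ => (hdfi i z).hasFDerivAt).const_mul _
  -- gradient sum vanishes at the minimizer
  have hlm : IsLocalMin F xs := Filter.Eventually.of_forall hmin
  have hDF0 : ((n : ℝ)⁻¹ • ∑ i, fderiv ℝ (fi i) xs) = 0 := hlm.hasFDerivAt_eq_zero (hDF xs)
  have h1 : ((n : ℝ)⁻¹ * (m : ℝ)⁻¹) • (∑ i, ∑ l, fderiv ℝ (f i l) xs) = 0 := by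
    rw [← hDF0]
    simp only [fun i => (hDfi i xs).fderiv]
    rw [Finset.smul_sum, Finset.smul_sum]
    exact Finset.sum_congr rfl fun i _ => by rw [smul_smul]
  have h2 : (∑ i, ∑ l, fderiv ℝ (f i l) xs) = 0 :=
    (smul_eq_zero.mp h1).resolve_left (mul_ne_zero (inv_ne_zero hn') (inv_ne_zero hm'))
  have hsum0 : ∑ i, ∑ l, gradient (f i l) xs = 0 := by
    have h3 : ∑ i, ∑ l, gradient (f i l) xs
        = (toDual ℝ (EuclideanSpace ℝ (Fin d))).symm (∑ i, ∑ l, fderiv ℝ (f i l) xs) := by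
      rw [map_sum]
      exact Finset.sum_congr rfl fun i _ => by rw [map_sum]; rfl
    rw [h3, h2, map_zero]
  have hip0 : ∑ i, ∑ l, ⟪⟪gradient (f i l) xs, x - xs⟫⟫ = 0 := by
    have h4 : ⟪⟪∑ i, ∑ l, gradient (f i l) xs, x - xs⟫⟫ = 0 := by
      rw [hsum0, inner_zero_left]
    simpa [sum_inner] using h4
  -- total function values
  have hFval : ∀ z, ∑ i, ∑ l, f i l z = (m : ℝ) * (n : ℝ) * F z := by
    intro z
    rw [hF]
    simp_rw [hfi]
    rw [← Finset.mul_sum]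
    field_simp
  -- 𝓛 bounds
  have h𝓛i : ∀ i l, 4 * (L' i l : ℝ) ≤ 𝓛 := by
    intro i l
    rw [h𝓛]
    have hle : L' i l ≤ univ.sup fun i => univ.sup fun l => L' i l :=
      le_trans (Finset.le_sup (f := fun l => L' i l) (Finset.mem_univ l))
        (Finset.le_sup (f := fun i => univ.sup fun l => L' i l) (Finset.mem_univ i))
    have := NNReal.coe_le_coe.mpr hle
    linarith
  have h𝓛0 : 0 ≤ 𝓛 := le_trans (by positivity) (h𝓛i ⟨0, hn⟩ ⟨0, hm⟩)
  -- cocoercivity bound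
  have hA : ∀ i l, ‖gradient (f i l) x - gradient (f i l) xs‖ ^ 2
      ≤ 𝓛 * (f i l x - f i l xs - ⟪⟪gradient (f i l) xs, x - xs⟫⟫) := by
    intro i l
    have h4 := cocoercive (f i l) (hconv i l) (hdiff i l) (L' i l) (L' i l).coe_nonneg
      (hlipD i l) x xs
    have hpos : 0 ≤ f i l x - f i l xs - ⟪⟪gradient (f i l) xs, x - xs⟫⟫ := by
      have h5 := first_order (f i l) (hconv i l) (hdiff i l) xs x
      rw [← inner_grad (f i l) xs (x - xs)] at h5
      linarith
    calc ‖gradient (f i l) x - gradient (f i l) xs‖ ^ 2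
        ≤ 4 * (L' i l : ℝ) * (f i l x - f i l xs - ⟪⟪gradient (f i l) xs, x - xs⟫⟫) := h4
      _ ≤ 𝓛 * (f i l x - f i l xs - ⟪⟪gradient (f i l) xs, x - xs⟫⟫) :=
          mul_le_mul_of_nonneg_right (h𝓛i i l) hpos
  have hSA : ∑ i, ∑ l, ‖gradient (f i l) x - gradient (f i l) xs‖ ^ 2
      ≤ (m : ℝ) * (n : ℝ) * 𝓛 * (F x - F xs) := by
    calc ∑ i, ∑ l, ‖gradient (f i l) x - gradient (f i l) xs‖ ^ 2
        ≤ ∑ i, ∑ l, 𝓛 * (f i l x - f i l xs - ⟪⟪gradient (f i l) xs, x - xs⟫⟫) :=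
          Finset.sum_le_sum fun i _ => Finset.sum_le_sum fun l _ => hA i l
      _ = 𝓛 * ((∑ i, ∑ l, f i l x) - (∑ i, ∑ l, f i l xs)
            - ∑ i, ∑ l, ⟪⟪gradient (f i l) xs, x - xs⟫⟫) := by
          simp only [← Finset.mul_sum]
          congr 1
          simp [Finset.sum_sub_distrib]
      _ = (m : ℝ) * (n : ℝ) * 𝓛 * (F x - F xs) := by
          rw [hFval x, hFval xs, hip0]
          ring
  -- variance bound per i
  have hCi : ∀ i, ∑ l, (gradient (f i l) (w i) - gradient (f i l) xs)
      = (m : ℝ) • (gradient (fi i) (w i) - gradient (fi i) xs) := by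
    intro i
    rw [hgfi i (w i), hgfi i xs, ← smul_sub, smul_smul, mul_inv_cancel₀ hm', one_smul,
      Finset.sum_sub_distrib]
  have hvar : ∀ i, ∑ l, ‖(gradient (f i l) (w i) - gradient (f i l) xs)
        - (gradient (fi i) (w i) - gradient (fi i) xs)‖ ^ 2
      ≤ ∑ l, ‖gradient (f i l) (w i) - gradient (f i l) xs‖ ^ 2 :=
    fun i => variance_le _ _ (hCi i)
  -- pointwise triangle bound
  have hT : ∀ i l, ‖gradient (f i l) x - gradient (f i l) (w i) +
        gradient (fi i) (w i) - gradient (fi i) xs‖ ^ 2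
      ≤ 2 * ‖gradient (f i l) x - gradient (f i l) xs‖ ^ 2
        + 2 * ‖(gradient (f i l) (w i) - gradient (f i l) xs)
            - (gradient (fi i) (w i) - gradient (fi i) xs)‖ ^ 2 := by
    intro i l
    set A := gradient (f i l) x - gradient (f i l) xs with hA'
    set D := (gradient (f i l) (w i) - gradient (f i l) xs)
      - (gradient (fi i) (w i) - gradient (fi i) xs) with hD'
    have he : gradient (f i l) x - gradient (f i l) (w i) +
        gradient (fi i) (w i) - gradient (fi i) xs = A - D := by
      rw [hA', hD']; abel
    rw [he]
    exact sq_norm_sub_le' A D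
  -- assembly
  have key : ∑ i, ∑ l, ‖gradient (f i l) x - gradient (f i l) (w i) +
        gradient (fi i) (w i) - gradient (fi i) xs‖ ^ 2
      ≤ 2 * ((m : ℝ) * (n : ℝ) * 𝓛 * (F x - F xs))
        + 2 * (∑ i, ∑ l, ‖gradient (f i l) (w i) - gradient (f i l) xs‖ ^ 2) := by
    calc ∑ i, ∑ l, ‖gradient (f i l) x - gradient (f i l) (w i) +
          gradient (fi i) (w i) - gradient (fi i) xs‖ ^ 2
        ≤ ∑ i, ∑ l, (2 * ‖gradient (f i l) x - gradient (f i l) xs‖ ^ 2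
            + 2 * ‖(gradient (f i l) (w i) - gradient (f i l) xs)
                - (gradient (fi i) (w i) - gradient (fi i) xs)‖ ^ 2) :=
          Finset.sum_le_sum fun i _ => Finset.sum_le_sum fun l _ => hT i l
      _ = 2 * (∑ i, ∑ l, ‖gradient (f i l) x - gradient (f i l) xs‖ ^ 2)
            + 2 * (∑ i, ∑ l, ‖(gradient (f i l) (w i) - gradient (f i l) xs)
                - (gradient (fi i) (w i) - gradient (fi i) xs)‖ ^ 2) := by
          simp [Finset.sum_add_distrib, Finset.mul_sum]
      _ ≤ 2 * ((m : ℝ) * (n : ℝ) * 𝓛 * (F x - F xs))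
            + 2 * (∑ i, ∑ l, ‖gradient (f i l) (w i) - gradient (f i l) xs‖ ^ 2) := by
          have hv := Finset.sum_le_sum (fun i (_ : i ∈ univ) => hvar i)
          linarith
  have hLHS : (n : ℝ)⁻¹ * ∑ i, (m : ℝ)⁻¹ * ∑ l,
      ‖gradient (f i l) x - gradient (f i l) (w i) +
        gradient (fi i) (w i) - gradient (fi i) xs‖ ^ 2
      = ((m : ℝ) * (n : ℝ))⁻¹ * ∑ i, ∑ l,
      ‖gradient (f i l) x - gradient (f i l) (w i) +
        gradient (fi i) (w i) - gradient (fi i) xs‖ ^ 2 := by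
    rw [← Finset.mul_sum, mul_inv]
    ring
  rw [hLHS]
  have hΔ0 : 0 ≤ F x - F xs := sub_nonneg.mpr (hmin x)
  have hSB0 : 0 ≤ ∑ i, ∑ l, ‖gradient (f i l) (w i) - gradient (f i l) xs‖ ^ 2 := by
    positivity
  have hc0 : (0 : ℝ) < ((m : ℝ) * (n : ℝ))⁻¹ := by positivity
  have hc1 : ((m : ℝ) * (n : ℝ))⁻¹ * ((m : ℝ) * (n : ℝ)) = 1 :=
    inv_mul_cancel₀ (by positivity)
  have hone : (1 / (m * n : ℝ)) = ((m : ℝ) * (n : ℝ))⁻¹ := by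
    rw [one_div]
  rw [hone]
  have step := mul_le_mul_of_nonneg_left key hc0.le
  nlinarith [mul_nonneg h𝓛0 hΔ0, mul_nonneg hc0.le hSB0]
end Main
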